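/- For x = cos t ∈ [−1,1] and each j, the fundamental Lagrange polynomial for the modified Chebyshev points satisfies |ℓ(𝒯_d^{(β)}, cos β_j; x)| ≤ (1/(d|sin dβ|)) · ( |sin(d(t−β)/2)/sin((t−β_j)/2)| + |sin(d(t+β)/2)/sin((t+β_j)/2)| ), whenever the denominators are nonzero. -/

import Mathlib

open Real Finset

/-- The modified Chebyshev points of degree `d` with parameter `β`. -/
noncomputable def modCheb (d : ℕ) (β : ℝ) : Finset ℝ :=
  (Finset.range d).image (fun j : ℕ => Real.cos (β + 2 * j * π / d))

/-- The fundamental Lagrange interpolation polynomial (as a function) at node `a`. -/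
noncomputable def lagBasis (A : Finset ℝ) (a : ℝ) (x : ℝ) : ℝ :=
  ∏ b ∈ A.erase a, (x - b) / (a - b)

open Polynomial

lemma prod_sub_pow {n : ℕ} (hn : 0 < n) {ζ : ℂ} (hζ : IsPrimitiveRoot ζ n) (α z : ℂ) :
    ∏ k ∈ Finset.range n, (z - ζ ^ k * α) = z ^ n - α ^ n := by
  have hroots : (X ^ n - C (α ^ n) : ℂ[X]).roots = Polynomial.nthRoots n (α ^ n) := rfl
  have h1 : Polynomial.nthRoots n (α ^ n) = (Multiset.range n).map (ζ ^ · * α) :=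
    hζ.nthRoots_eq rfl
  have hmonic : (X ^ n - C (α ^ n) : ℂ[X]).Monic := monic_X_pow_sub_C _ hn.ne'
  have hcard : Multiset.card (X ^ n - C (α ^ n) : ℂ[X]).roots =
      (X ^ n - C (α ^ n) : ℂ[X]).natDegree := by
    rw [hroots, h1, natDegree_X_pow_sub_C]; simp
  have h2 := prod_multiset_X_sub_C_of_monic_of_roots_card_eq hmonic hcard
  have h3 := congrArg (Polynomial.eval z) h2
  rw [Polynomial.eval_multiset_prod, Multiset.map_map] at h3
  simp only [Function.comp, Polynomial.eval_sub, Polynomial.eval_X, Polynomial.eval_C] at h3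
  rw [Polynomial.eval_pow, Polynomial.eval_X] at h3
  rw [← h3, hroots, h1, Multiset.map_map, Finset.prod, Finset.range]
  rfl

lemma prod_two_cos (d : ℕ) (hd : d ≠ 0) (t β : ℝ) :
    ∏ k ∈ Finset.range d, ((2:ℂ) * Complex.cos t - 2 * Complex.cos (β + 2*k*π/d))
      = 2 * Complex.cos (d*t) - 2 * Complex.cos (d*β) := by
  have hdC : (d:ℂ) ≠ 0 := Nat.cast_ne_zero.mpr hd
  set z := Complex.exp (t*Complex.I) with hzdef
  set w := Complex.exp (β*Complex.I) with hwdef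
  set ζ := Complex.exp (2*π*Complex.I/d) with hζdef
  have hζ : IsPrimitiveRoot ζ d := Complex.isPrimitiveRoot_exp d hd
  have hz : z ≠ 0 := Complex.exp_ne_zero _
  have hw : w ≠ 0 := Complex.exp_ne_zero _
  have key : ∀ k : ℕ, (2:ℂ) * Complex.cos t - 2*Complex.cos ((β:ℂ) + 2*k*π/d)
      = z⁻¹ * ((z - ζ^k * w) * (z - (ζ⁻¹)^k * w⁻¹)) := by
    intro k
    have e1 : Complex.exp (((β:ℂ) + 2*k*π/d) * Complex.I) = ζ^k * w := by
      rw [hζdef, hwdef, ← Complex.exp_nat_mul, ← Complex.exp_add]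
      congr 1
      field_simp
      ring
    have e2 : Complex.exp (-((β:ℂ) + 2*k*π/d) * Complex.I) = (ζ⁻¹)^k * w⁻¹ := by
      rw [neg_mul, Complex.exp_neg, e1, mul_inv, inv_pow]
    rw [Complex.two_cos, Complex.two_cos, e1, e2, ← hzdef,
      show Complex.exp (-↑t * Complex.I) = z⁻¹ by rw [neg_mul, Complex.exp_neg]]
    have hu : ζ^k * w ≠ 0 := mul_ne_zero (pow_ne_zero _ (Complex.exp_ne_zero _)) hw
    field_simp
    have hζk : ζ ^ k * ζ⁻¹ ^ k = 1 := by
      rw [← mul_pow, mul_inv_cancel₀ (Complex.exp_ne_zero _), one_pow]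
    linear_combination (-w) * hζk
  calc ∏ k ∈ Finset.range d, ((2:ℂ) * Complex.cos t - 2 * Complex.cos (β + 2*k*π/d))
      = ∏ k ∈ Finset.range d, z⁻¹ * ((z - ζ^k * w) * (z - (ζ⁻¹)^k * w⁻¹)) :=
        Finset.prod_congr rfl (fun k _ => key k)
    _ = (z⁻¹)^d * ((z^d - w^d) * (z^d - (w⁻¹)^d)) := by
        rw [Finset.prod_mul_distrib, Finset.prod_mul_distrib, Finset.prod_const,
          prod_sub_pow (Nat.pos_of_ne_zero hd) hζ, prod_sub_pow (Nat.pos_of_ne_zero hd) hζ.inv,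
          Finset.card_range]
    _ = z^d + (z⁻¹)^d - (w^d + (w⁻¹)^d) := by
        field_simp
        have hA : z ^ d * z⁻¹ ^ d = 1 := by rw [← mul_pow, mul_inv_cancel₀ hz, one_pow]
        have hB : w ^ d * w⁻¹ ^ d = 1 := by rw [← mul_pow, mul_inv_cancel₀ hw, one_pow]
        linear_combination (z^d - w^d - w⁻¹^d) * hA + z⁻¹^d * hB
    _ = 2 * Complex.cos (d*t) - 2 * Complex.cos (d*β) := by
        have hzd : z ^ d = Complex.exp (↑d * ↑t * Complex.I) := by
          rw [hzdef, ← Complex.exp_nat_mul]; ring_nf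
        have hwd : w ^ d = Complex.exp (↑d * ↑β * Complex.I) := by
          rw [hwdef, ← Complex.exp_nat_mul]; ring_nf
        have hzd' : (z ^ d)⁻¹ = Complex.exp (-(↑d * ↑t) * Complex.I) := by
          rw [hzd, ← Complex.exp_neg]; congr 1; ring
        have hwd' : (w ^ d)⁻¹ = Complex.exp (-(↑d * ↑β) * Complex.I) := by
          rw [hwd, ← Complex.exp_neg]; congr 1; ring
        rw [Complex.two_cos, Complex.two_cos, inv_pow, inv_pow, hzd', hwd', hzd, hwd]

lemma prod_cos (d : ℕ) (hd : d ≠ 0) (t β : ℝ) :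
    ∏ k ∈ Finset.range d, (2 * Real.cos t - 2 * Real.cos (β + 2*k*π/d))
      = 2*Real.cos (d*t) - 2*Real.cos (d*β) := by
  have h := prod_two_cos d hd t β
  have h2 : ((∏ k ∈ Finset.range d, (2 * Real.cos t - 2 * Real.cos (β + 2*k*π/d)) : ℝ) : ℂ)
      = ((2*Real.cos (d*t) - 2*Real.cos (d*β) : ℝ) : ℂ) := by
    push_cast
    convert h using 3
  exact_mod_cast h2

-- β_j notation
lemma sin_d_betaj (d : ℕ) (hd : d ≠ 0) (β : ℝ) (j : ℕ) :
    Real.sin (d * (β + 2*j*π/d)) = Real.sin (d*β) := by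
  have hdR : (d:ℝ) ≠ 0 := Nat.cast_ne_zero.mpr hd
  have : (d:ℝ) * (β + 2*j*π/d) = d*β + j*(2*π) := by field_simp
  rw [this]
  exact Real.sin_add_int_mul_two_pi _ j

lemma sin_betaj_ne (d : ℕ) (hd : d ≠ 0) (β : ℝ) (hβ : Real.sin (d*β) ≠ 0) (j : ℕ) :
    Real.sin (β + 2*j*π/d) ≠ 0 := by
  intro h
  rcases Real.sin_eq_zero_iff.mp h with ⟨n, hn⟩
  apply hβ
  have hdR : (d:ℝ) ≠ 0 := Nat.cast_ne_zero.mpr hd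
  have : (d:ℝ)*β = (n*d - 2*j) * π := by
    have : β = n*π - 2*j*π/d := by linarith
    rw [this]; field_simp
  rw [this]
  have : ((n*d - 2*j : ℤ) : ℝ) * π = ((n:ℝ)*d - 2*j) * π := by push_cast; ring
  rw [← this, Real.sin_int_mul_pi]

lemma cos_nodes_injOn (d : ℕ) (hd : d ≠ 0) (β : ℝ) (hβ : Real.sin (d*β) ≠ 0) :
    Set.InjOn (fun k : ℕ => Real.cos (β + 2*k*π/d)) (Finset.range d) := by
  have hdR : (d:ℝ) ≠ 0 := Nat.cast_ne_zero.mpr hd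
  have hπ := Real.pi_ne_zero
  intro k hk l hl h
  simp only [Finset.coe_range, Set.mem_Iio] at hk hl
  rcases Real.cos_eq_cos_iff.mp h with ⟨n, hn | hn⟩
  · have h0 : ((l:ℝ) - k - n*d) * (2*π) = 0 := by
      field_simp at hn
      nlinarith [hn]
    have h1 : ((l:ℝ) - k - n*d) = 0 := by
      rcases mul_eq_zero.mp h0 with h | h
      · exact h
      · exact absurd h (by positivity)
    have h2 : ((l:ℝ)) = k + d * n := by push_cast; linarith
    have h3 : (l:ℤ) = k + d * n := by exact_mod_cast h2
    have hdvd : (d:ℤ) ∣ (l:ℤ) - k := ⟨n, by omega⟩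
    have : (l:ℤ) - k = 0 := Int.eq_zero_of_abs_lt_dvd hdvd (by rw [abs_lt]; omega)
    omega
  · exfalso
    apply hβ
    have h1 : (d:ℝ)*β = ((n*d - (k+l) : ℤ) : ℝ) * π := by
      push_cast
      field_simp at hn ⊢
      nlinarith [hn]
    rw [h1, Real.sin_int_mul_pi]

lemma num_eq (d : ℕ) (hd0 : d ≠ 0) (β t : ℝ) (j : ℕ) (hj : j < d) :
    (Real.cos t - Real.cos (β + 2*j*π/d)) *
      ∏ k ∈ (Finset.range d).erase j, (Real.cos t - Real.cos (β + 2*k*π/d))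
    = (2*Real.cos (d*t) - 2*Real.cos (d*β))/2^d := by
  have h1 := prod_cos d hd0 t β
  have h2 : ∏ k ∈ Finset.range d, (2 * Real.cos t - 2 * Real.cos (β + 2*k*π/d))
      = 2^d * ∏ k ∈ Finset.range d, (Real.cos t - Real.cos (β + 2*k*π/d)) := by
    rw [show (2:ℝ)^d = ∏ _k ∈ Finset.range d, (2:ℝ) by simp, ← Finset.prod_mul_distrib]
    exact Finset.prod_congr rfl fun k _ => by ring
  have h3 : ∏ k ∈ Finset.range d, (Real.cos t - Real.cos (β + 2*k*π/d))
      = (Real.cos t - Real.cos (β + 2*j*π/d)) *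
        ∏ k ∈ (Finset.range d).erase j, (Real.cos t - Real.cos (β + 2*k*π/d)) :=
    (Finset.mul_prod_erase _ _ (Finset.mem_range.mpr hj)).symm
  rw [h2, h3] at h1
  have h4 : (2:ℝ)^d ≠ 0 := by positivity
  rw [eq_div_iff h4]
  linarith [h1]

lemma denom_eq (d : ℕ) (hd : 1 ≤ d) (β : ℝ) (j : ℕ) (hj : j < d) :
    Real.sin (β + 2*j*π/d) * (2:ℝ)^(d-1) *
      ∏ k ∈ (Finset.range d).erase j, (Real.cos (β + 2*j*π/d) - Real.cos (β + 2*k*π/d))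
    = d * Real.sin (d*β) := by
  have hd0 : d ≠ 0 := by omega
  set c : ℕ → ℝ := fun k => Real.cos (β + 2*k*π/d) with hc
  set bj : ℝ := β + 2*j*π/d with hbj
  set g : ℝ → ℝ := fun t => ∏ k ∈ (Finset.range d).erase j, (Real.cos t - c k) with hg
  have hfun : ∀ t : ℝ, (Real.cos t - c j) * g t = (2*Real.cos (d*t) - 2*Real.cos (d*β))/2^d := by
    intro t
    have h1 := prod_cos d hd0 t β
    have h2 : ∏ k ∈ Finset.range d, (2 * Real.cos t - 2 * Real.cos (β + 2*k*π/d))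
        = 2^d * ∏ k ∈ Finset.range d, (Real.cos t - c k) := by
      rw [show (2:ℝ)^d = ∏ _k ∈ Finset.range d, (2:ℝ) by simp, ← Finset.prod_mul_distrib]
      refine Finset.prod_congr rfl fun k _ => by rw [hc]; ring
    have h3 : ∏ k ∈ Finset.range d, (Real.cos t - c k)
        = (Real.cos t - c j) * g t := (Finset.mul_prod_erase _ _ (Finset.mem_range.mpr hj)).symm
    rw [h2, h3] at h1
    have : (2:ℝ)^d ≠ 0 := by positivity
    field_simp
    linarith [h1]
  -- differentiability of g
  have hG : ∀ k ∈ (Finset.range d).erase j,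
      HasDerivAt (fun t => Real.cos t - c k) (-Real.sin bj) bj :=
    fun k _ => (Real.hasDerivAt_cos bj).sub_const _
  have hgD := HasDerivAt.fun_finsetProd hG
  have hLHS : HasDerivAt (fun t => (Real.cos t - c j) * g t)
      ((-Real.sin bj) * g bj + (Real.cos bj - c j) *
        (∑ i ∈ (Finset.range d).erase j,
          (∏ k ∈ ((Finset.range d).erase j).erase i, (Real.cos bj - c k)) • (-Real.sin bj))) bj :=
    HasDerivAt.mul ((Real.hasDerivAt_cos bj).sub_const _) hgD
  have hcj : Real.cos bj - c j = 0 := by rw [hbj, hc]; ring_nf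
  rw [hcj, zero_mul, add_zero] at hLHS
  have hinner : HasDerivAt (fun t : ℝ => (d:ℝ)*t) d bj := by
    simpa using (hasDerivAt_id bj).const_mul (d:ℝ)
  have hcomp : HasDerivAt (fun t => Real.cos ((d:ℝ)*t)) (-Real.sin ((d:ℝ)*bj) * d) bj :=
    (Real.hasDerivAt_cos _).comp bj hinner
  have hRHS : HasDerivAt (fun t => (2*Real.cos ((d:ℝ)*t) - 2*Real.cos (d*β))/2^d)
      ((2 * (-Real.sin ((d:ℝ)*bj) * d)) / 2^d) bj :=
    ((hcomp.const_mul 2).sub_const _).div_const _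
  have heq : (fun t => (Real.cos t - c j) * g t)
      = (fun t => (2*Real.cos ((d:ℝ)*t) - 2*Real.cos (d*β))/2^d) := funext hfun
  rw [heq] at hLHS
  have huniq := hLHS.unique hRHS
  have hsin : Real.sin ((d:ℝ)*bj) = Real.sin (d*β) := sin_d_betaj d hd0 β j
  rw [hsin] at huniq
  -- conclude
  have h2d : (2:ℝ)^d = 2 * 2^(d-1) := by
    rw [← pow_succ']
    congr 1
    omega
  have h2 : (2:ℝ)^(d-1) ≠ 0 := by positivity
  rw [h2d] at huniq
  have : Real.sin bj * g bj = (d:ℝ) * Real.sin (d*β) / 2^(d-1) := by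
    field_simp at huniq ⊢
    nlinarith [huniq]
  rw [hg] at this
  field_simp at this
  nlinarith [this]

theorem lagBasis_modCheb_bound (d : ℕ) (hd : 1 ≤ d) (β : ℝ)
    (hβ : Real.sin (d * β) ≠ 0) (j : ℕ) (hj : j < d) (t : ℝ)
    (h1 : Real.sin ((t + (β + 2 * j * π / d)) / 2) ≠ 0)
    (h2 : Real.sin ((t - (β + 2 * j * π / d)) / 2) ≠ 0) :
    |lagBasis (modCheb d β) (Real.cos (β + 2 * j * π / d)) (Real.cos t)| ≤
      (1 / (d * |Real.sin (d * β)|)) *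
        (|Real.sin (d * (t - β) / 2) / Real.sin ((t - (β + 2 * j * π / d)) / 2)| +
         |Real.sin (d * (t + β) / 2) / Real.sin ((t + (β + 2 * j * π / d)) / 2)|) := by
  have hd0 : d ≠ 0 := by omega
  have hdR : (d:ℝ) ≠ 0 := Nat.cast_ne_zero.mpr hd0
  set bj : ℝ := β + 2 * j * π / d with hbj
  set Sp : ℝ := Real.sin (d * (t + β) / 2) with hSp
  set Sm : ℝ := Real.sin (d * (t - β) / 2) with hSm
  set sA : ℝ := Real.sin ((t - bj) / 2) with hsA
  set sB : ℝ := Real.sin ((t + bj) / 2) with hsB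
  set cA : ℝ := Real.cos ((t - bj) / 2) with hcA
  set cB : ℝ := Real.cos ((t + bj) / 2) with hcB
  set N : ℝ := ∏ k ∈ (Finset.range d).erase j, (Real.cos t - Real.cos (β + 2*k*π/d)) with hN
  set D : ℝ := ∏ k ∈ (Finset.range d).erase j, (Real.cos bj - Real.cos (β + 2*k*π/d)) with hD
  have hinj := cos_nodes_injOn d hd0 β hβ
  -- the erased node set
  have himg : (modCheb d β).erase (Real.cos bj)
      = Finset.image (fun k : ℕ => Real.cos (β + 2*k*π/d)) ((Finset.range d).erase j) := by
    ext x
    simp only [modCheb, Finset.mem_erase, Finset.mem_image, Finset.mem_range]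
    constructor
    · rintro ⟨hx, k, hk, rfl⟩
      exact ⟨k, ⟨fun hkj => hx (by rw [hkj, hbj]), hk⟩, rfl⟩
    · rintro ⟨k, ⟨hkj, hk⟩, rfl⟩
      refine ⟨fun hcc => hkj (hinj (by simp [hk]) (by simp [hj]) (by simpa using hcc)), k, hk, rfl⟩
  have hlag : lagBasis (modCheb d β) (Real.cos bj) (Real.cos t) = N / D := by
    rw [lagBasis, himg, Finset.prod_image (fun x hx y hy hxy =>
      hinj (by simp [Finset.mem_of_mem_erase hx, Finset.mem_range.mp (Finset.mem_of_mem_erase hx)])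
        (by simp [Finset.mem_range.mp (Finset.mem_of_mem_erase hy)]) hxy),
      Finset.prod_div_distrib, hN, hD]
  -- trig identities
  have hcost : Real.cos t - Real.cos bj = -2 * sB * sA := Real.cos_sub_cos t bj
  have hcne : Real.cos t - Real.cos bj ≠ 0 := by
    rw [hcost]; exact mul_ne_zero (mul_ne_zero (by norm_num) h1) h2
  have hcosd : Real.cos (d*t) - Real.cos (d*β) = -2 * Sp * Sm := by
    have h := Real.cos_sub_cos ((d:ℝ)*t) ((d:ℝ)*β)
    rw [show ((d:ℝ)*t + (d:ℝ)*β)/2 = (d:ℝ)*(t+β)/2 by ring,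
      show ((d:ℝ)*t - (d:ℝ)*β)/2 = (d:ℝ)*(t-β)/2 by ring] at h
    exact h
  have hsinbj : Real.sin bj = sB * cA - cB * sA := by
    have h := Real.sin_sub ((t+bj)/2) ((t-bj)/2)
    rw [show (t+bj)/2 - (t-bj)/2 = bj by ring] at h
    exact h
  -- numerator and denominator values
  have hNid := num_eq d hd0 β t j hj
  rw [← hbj, ← hN] at hNid
  have h2d1 : ((2:ℝ))^d = 2 * 2^(d-1) := by
    rw [← pow_succ']; congr 1; omega
  have h2ne : ((2:ℝ))^(d-1) ≠ 0 := by positivity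
  have hN2 : N * sA * sB * 2^(d-1) = Sp * Sm := by
    rw [hcost] at hNid
    rw [show 2*Real.cos ((d:ℝ)*t) - 2*Real.cos ((d:ℝ)*β) = -4 * Sp * Sm by
      linarith [hcosd], h2d1] at hNid
    field_simp at hNid
    linarith [hNid]
  have hDid := denom_eq d hd β j hj
  rw [← hbj, ← hD, hsinbj] at hDid
  have hDne : D ≠ 0 := by
    intro h0
    rw [h0, mul_zero] at hDid
    exact (mul_ne_zero hdR hβ) hDid.symm
  -- closed form
  have key : N / D = (1/((d:ℝ) * Real.sin (d*β))) * (Sm/sA * (Sp*cA) - Sp/sB * (Sm*cB)) := by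
    rw [div_eq_iff hDne]
    field_simp
    linear_combination (-(N*sA*sB)) * hDid + ((sB*cA - cB*sA)*D) * hN2
  rw [hlag, key, abs_mul,
    show |1/((d:ℝ) * Real.sin (d*β))| = 1/((d:ℝ) * |Real.sin (d*β)|) by
      rw [abs_div, abs_one, abs_mul, Nat.abs_cast]]
  refine mul_le_mul_of_nonneg_left ?_ (by positivity)
  refine (abs_sub _ _).trans (add_le_add ?_ ?_)
  · rw [abs_mul]
    refine mul_le_of_le_one_right (abs_nonneg _) ?_
    rw [abs_mul]
    exact mul_le_one₀ (Real.abs_sin_le_one _) (abs_nonneg _) (Real.abs_cos_le_one _)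
  · rw [abs_mul]
    refine mul_le_of_le_one_right (abs_nonneg _) ?_
    rw [abs_mul]
    exact mul_le_one₀ (Real.abs_sin_le_one _) (abs_nonneg _) (Real.abs_cos_le_one _)
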